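/- Let a, b ∈ ℝ³ with a ≠ b, a ≠ −b, and ‖a+b‖ + ‖a−b‖ = 2. For i, j ∈ {0,1} set n_{ij} := (1/2)((−1)^{i+1} a + (−1)^{j+1} b) (all nonzero). Then G defined by G(i,j) := ‖n_{ij}‖ · (1/2)(I + (n_{ij}/‖n_{ij}‖)·σ) is a joint observable of the simple qubit observables E^{1,a} and E^{1,b}, and it is their unique joint observable. -/

import Mathlib

open Matrix
open scoped ComplexOrder

noncomputable section

/-- 2×2 complex matrices. -/
abbrev Mat2 := Matrix (Fin 2) (Fin 2) ℂ

/-- The Pauli matrix σ₁. -/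
def sigma1 : Mat2 := !![0, 1; 1, 0]
/-- The Pauli matrix σ₂. -/
def sigma2 : Mat2 := !![0, -Complex.I; Complex.I, 0]
/-- The Pauli matrix σ₃. -/
def sigma3 : Mat2 := !![1, 0; 0, -1]

/-- ℝ³ with the Euclidean norm. -/
abbrev E3 := EuclideanSpace ℝ (Fin 3)

/-- For `v ∈ ℝ³`, `v·σ = v₁σ₁ + v₂σ₂ + v₃σ₃`. -/
def dotSigma (v : E3) : Mat2 := (v 0 : ℂ) • sigma1 + (v 1 : ℂ) • sigma2 + (v 2 : ℂ) • sigma3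

/-- `A^{α,a} = (1/2)(α·I + a·σ)`. -/
def Amat (α : ℝ) (a : E3) : Mat2 := (2 : ℂ)⁻¹ • ((α : ℂ) • (1 : Mat2) + dotSigma a)

/-- An operator is an effect if `0 ≤ A ≤ I` in the Loewner order. -/
def IsEffect (A : Mat2) : Prop := A.PosSemidef ∧ (1 - A).PosSemidef

/-- The Loewner order: `A ≤ B` iff `B - A` is positive semidefinite. -/
def loewnerLE (A B : Mat2) : Prop := (B - A).PosSemidef

/-- The simple (two-outcome) qubit observable `E^{α,a}`,
with `E^{α,a}(1) = A^{α,a}` and `E^{α,a}(0) = I - A^{α,a}`. -/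
def Eobs (α : ℝ) (a : E3) : Fin 2 → Mat2 := fun i => if i = 1 then Amat α a else 1 - Amat α a

/-- `G` is a joint observable of the two-outcome observables `E` and `F`. -/
def IsJointObs (G : Fin 2 → Fin 2 → Mat2) (E F : Fin 2 → Mat2) : Prop :=
  (∀ i j, (G i j).PosSemidef) ∧ (∑ i, ∑ j, G i j) = 1 ∧
    (∀ i, (∑ j, G i j) = E i) ∧ (∀ j, (∑ i, G i j) = F j)

/-- Joint measurability of two two-outcome observables. -/
def JointlyMeasurable2 (E F : Fin 2 → Mat2) : Prop := ∃ G, IsJointObs G E F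

/-- `G` is a joint observable of the three two-outcome observables `E`, `F` and `K`. -/
def IsJointObs3 (G : Fin 2 → Fin 2 → Fin 2 → Mat2) (E F K : Fin 2 → Mat2) : Prop :=
  (∀ i j k, (G i j k).PosSemidef) ∧ (∑ i, ∑ j, ∑ k, G i j k) = 1 ∧
    (∀ i, (∑ j, ∑ k, G i j k) = E i) ∧ (∀ j, (∑ i, ∑ k, G i j k) = F j) ∧
    (∀ k, (∑ i, ∑ j, G i j k) = K k)

/-- Joint measurability of three two-outcome observables. -/
def JointlyMeasurable3 (E F K : Fin 2 → Mat2) : Prop := ∃ G, IsJointObs3 G E F K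

/-- `n_{ij} = (1/2)((-1)^{i+1} a + (-1)^{j+1} b)`. -/
def nvec (a b : E3) (i j : Fin 2) : E3 :=
  (2 : ℝ)⁻¹ • ((-1 : ℝ) ^ ((i : ℕ) + 1) • a + (-1 : ℝ) ^ ((j : ℕ) + 1) • b)

/-- `G(i,j) = ‖n_{ij}‖ (1/2)(I + (n_{ij}/‖n_{ij}‖)·σ)`. -/
def Gab (a b : E3) : Fin 2 → Fin 2 → Mat2 := fun i j =>
  (‖nvec a b i j‖ : ℂ) •
    ((2 : ℂ)⁻¹ • ((1 : Mat2) + dotSigma (‖nvec a b i j‖⁻¹ • nvec a b i j)))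

/-! ### Auxiliary machinery -/

namespace BJU

/-- The parametrized matrix `(1/2)(t I + g·σ)`. -/
def pmat (t : ℝ) (g : E3) : Mat2 := (2:ℂ)⁻¹ • ((t:ℂ) • (1 : Mat2) + dotSigma g)

lemma pmat_eq (t : ℝ) (g : E3) :
    pmat t g = !![(((t + g 2)/2 : ℝ) : ℂ),
                  ((g 0/2 : ℝ) : ℂ) - ((g 1/2 : ℝ) : ℂ) * Complex.I;
                  ((g 0/2 : ℝ) : ℂ) + ((g 1/2 : ℝ) : ℂ) * Complex.I,
                  (((t - g 2)/2 : ℝ) : ℂ)] := by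
  ext i j
  fin_cases i <;> fin_cases j <;>
    simp [pmat, dotSigma, sigma1, sigma2, sigma3, Matrix.one_apply] <;>
    push_cast <;> ring

lemma pmat_add (t s : ℝ) (g h : E3) : pmat t g + pmat s h = pmat (t+s) (g+h) := by
  rw [pmat_eq, pmat_eq, pmat_eq]
  ext i j
  fin_cases i <;> fin_cases j <;>
    simp [PiLp.add_apply] <;> push_cast <;> ring

lemma pmat_sub (t s : ℝ) (g h : E3) : pmat t g - pmat s h = pmat (t-s) (g-h) := by
  rw [pmat_eq, pmat_eq, pmat_eq]
  ext i j
  fin_cases i <;> fin_cases j <;>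
    simp [PiLp.sub_apply] <;> push_cast <;> ring

lemma one_eq_pmat : (1 : Mat2) = pmat 2 0 := by
  rw [pmat_eq]
  ext i j
  fin_cases i <;> fin_cases j <;> simp [Matrix.one_apply]

lemma quad_form (M : Mat2) (x : Fin 2 → ℂ) :
    dotProduct (star x) (M *ᵥ x) =
      star (x 0) * (M 0 0 * x 0 + M 0 1 * x 1) + star (x 1) * (M 1 0 * x 0 + M 1 1 * x 1) := by
  simp [dotProduct, Matrix.mulVec, Fin.sum_univ_two]

lemma psd_mk (a d : ℝ) (m : ℂ) (ha : 0 ≤ a) (hd : 0 ≤ d) (hm : Complex.normSq m ≤ a*d) :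
    (!![(a:ℂ), starRingEnd ℂ m; m, (d:ℂ)] : Mat2).PosSemidef := by
  refine Matrix.PosSemidef.of_dotProduct_mulVec_nonneg ?_ ?_
  · ext i j
    fin_cases i <;> fin_cases j <;>
      simp [Matrix.conjTranspose_apply, Complex.ext_iff]
  · intro x
    rw [quad_form]
    set x0 := x 0; set x1 := x 1
    simp only [Matrix.cons_val', Matrix.cons_val_zero, Matrix.cons_val_one, Matrix.head_cons,
      Matrix.empty_val', Matrix.cons_val_fin_one, Matrix.head_fin_const, Matrix.of_apply]
    set w : ℂ := starRingEnd ℂ x0 * starRingEnd ℂ m * x1 with hw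
    have key : star x0 * ((a:ℂ) * x0 + starRingEnd ℂ m * x1) + star x1 * (m * x0 + (d:ℂ) * x1)
        = ((a * Complex.normSq x0 + d * Complex.normSq x1 + 2 * w.re : ℝ) : ℂ) := by
      simp [hw, Complex.ext_iff, Complex.normSq_apply, Complex.mul_re, Complex.mul_im]
      constructor <;> ring
    rw [key]
    rw [Complex.zero_le_real]
    have h1 : -‖w‖ ≤ w.re := by
      have := Complex.abs_re_le_norm w; rw [abs_le] at this; linarith [this.1]
    have h2 : ‖w‖ = ‖x0‖ * ‖m‖ * ‖x1‖ := by
      simp only [hw, norm_mul, Complex.norm_conj]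
    have h3 : Complex.normSq x0 = ‖x0‖^2 := (Complex.sq_norm x0).symm
    have h4 : Complex.normSq x1 = ‖x1‖^2 := (Complex.sq_norm x1).symm
    have h5 : Complex.normSq m = ‖m‖^2 := (Complex.sq_norm m).symm
    have hA : 0 ≤ ‖x0‖ := norm_nonneg _
    have hB : 0 ≤ ‖x1‖ := norm_nonneg _
    have hM : 0 ≤ ‖m‖ := norm_nonneg _
    rw [h3, h4]
    rw [h5] at hm
    set A := ‖x0‖
    set B := ‖x1‖
    set M := ‖m‖
    set sa := Real.sqrt a with hsa
    set sd := Real.sqrt d with hsd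
    have hsa2 : sa^2 = a := Real.sq_sqrt ha
    have hsd2 : sd^2 = d := Real.sq_sqrt hd
    have hsaN : 0 ≤ sa := Real.sqrt_nonneg _
    have hsdN : 0 ≤ sd := Real.sqrt_nonneg _
    have hMle : M ≤ sa * sd := by
      nlinarith [mul_nonneg hsaN hsdN]
    have hmul : M * (A * B) ≤ (sa * sd) * (A * B) :=
      mul_le_mul_of_nonneg_right hMle (mul_nonneg hA hB)
    nlinarith [sq_nonneg (sa * A - sd * B), h1, h2]

lemma psd_elim {M : Mat2} (h : M.PosSemidef) :
    (M 0 0).im = 0 ∧ (M 1 1).im = 0 ∧ M 0 1 = starRingEnd ℂ (M 1 0) ∧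
    0 ≤ (M 0 0).re ∧ 0 ≤ (M 1 1).re ∧
    Complex.normSq (M 1 0) ≤ (M 0 0).re * (M 1 1).re := by
  set a := (M 0 0).re with ha'
  set d := (M 1 1).re with hd'
  set m := M 1 0 with hm'
  have h00 : 0 ≤ M 0 0 := by
    have := h.dotProduct_mulVec_nonneg ![1, 0]
    rw [quad_form] at this
    simpa using this
  have h11 : 0 ≤ M 1 1 := by
    have := h.dotProduct_mulVec_nonneg ![0, 1]
    rw [quad_form] at this
    simpa using this
  have ha0 : 0 ≤ a ∧ (M 0 0).im = 0 := by
    rw [Complex.le_def] at h00; simpa using ⟨h00.1, h00.2.symm⟩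
  have hd0 : 0 ≤ d ∧ (M 1 1).im = 0 := by
    rw [Complex.le_def] at h11; simpa using ⟨h11.1, h11.2.symm⟩
  have e01 : M 0 1 = starRingEnd ℂ m := (h.1.apply 0 1).symm
  have e00 : M 0 0 = (a : ℂ) := by
    apply Complex.ext <;> simp [ha0.2, ha']
  have e11 : M 1 1 = (d : ℂ) := by
    apply Complex.ext <;> simp [hd0.2, hd']
  have hQ : ∀ t : ℝ, 0 ≤ a*t^2*Complex.normSq m - 2*t*Complex.normSq m + d := by
    intro t
    have h2 := h.dotProduct_mulVec_nonneg ![(t:ℂ) * starRingEnd ℂ m, -1]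
    rw [quad_form] at h2
    simp only [Matrix.cons_val_zero, Matrix.cons_val_one, Matrix.head_cons] at h2
    rw [e00, e11, e01, ← hm'] at h2
    have key : star ((t:ℂ) * starRingEnd ℂ m) * ((a:ℂ) * ((t:ℂ) * starRingEnd ℂ m)
          + starRingEnd ℂ m * (-1)) + star (-1 : ℂ) * (m * ((t:ℂ) * starRingEnd ℂ m) + (d:ℂ) * (-1))
        = ((a*t^2*Complex.normSq m - 2*t*Complex.normSq m + d : ℝ) : ℂ) := by
      simp [Complex.ext_iff, Complex.normSq_apply, Complex.mul_re, Complex.mul_im, pow_two]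
      constructor <;> ring
    rw [key, Complex.zero_le_real] at h2
    exact h2
  refine ⟨ha0.2, hd0.2, e01, ha0.1, hd0.1, ?_⟩
  rcases eq_or_lt_of_le ha0.1 with hE | hP
  · have hns : Complex.normSq m = 0 := by
      by_contra hc
      have hpos : 0 < Complex.normSq m := lt_of_le_of_ne (Complex.normSq_nonneg m) (Ne.symm hc)
      have := hQ ((d+1)/(2*Complex.normSq m))
      rw [← hE] at this
      have h9 : (0:ℝ)*((d+1)/(2*Complex.normSq m))^2*Complex.normSq m
          - 2*((d+1)/(2*Complex.normSq m))*Complex.normSq m + d = -1 := by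
        field_simp
        ring
      rw [h9] at this
      linarith
    rw [hns, ← hE]
    nlinarith
  · have := hQ (1/a)
    have h1 : a ≠ 0 := ne_of_gt hP
    have h9 := mul_nonneg hP.le this
    have h10 : a*(a * (1/a)^2 * Complex.normSq m - 2*(1/a)*Complex.normSq m + d)
        = a*d - Complex.normSq m := by
      field_simp
      ring
    rw [h10] at h9
    linarith

lemma norm_sq_E3 (g : E3) : ‖g‖^2 = g 0^2 + g 1^2 + g 2^2 := by
  rw [EuclideanSpace.norm_eq, Real.sq_sqrt (by positivity)]
  simp [Fin.sum_univ_three, sq_abs]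

lemma pmat_psd_iff (t : ℝ) (g : E3) : (pmat t g).PosSemidef ↔ ‖g‖ ≤ t := by
  have h4 := norm_sq_E3 g
  have h5 : 0 ≤ ‖g‖ := norm_nonneg g
  constructor
  · intro h
    obtain ⟨-, -, -, h1, h2, h3⟩ := psd_elim h
    rw [pmat_eq] at h1 h2 h3
    simp [Complex.normSq_apply] at h1 h2 h3
    nlinarith [sq_nonneg (‖g‖ - t), sq_nonneg (‖g‖ + t)]
  · intro h
    have key : pmat t g = !![(((t + g 2)/2 : ℝ):ℂ),
        starRingEnd ℂ (((g 0/2 : ℝ) : ℂ) + ((g 1/2 : ℝ) : ℂ) * Complex.I);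
        ((g 0/2 : ℝ) : ℂ) + ((g 1/2 : ℝ) : ℂ) * Complex.I, (((t - g 2)/2 : ℝ):ℂ)] := by
      rw [pmat_eq]
      ext i j
      fin_cases i <;> fin_cases j <;>
        simp [map_add, _root_.map_mul, map_ofNat, map_inv₀, map_div₀,
          Complex.conj_ofReal, Complex.conj_I] <;> try ring
    rw [key]
    apply psd_mk
    · nlinarith
    · nlinarith
    · simp [Complex.normSq_apply]
      nlinarith

lemma dotSigma_smul (c : ℝ) (v : E3) : dotSigma (c • v) = (c : ℂ) • dotSigma v := by
  simp only [dotSigma, PiLp.smul_apply, smul_eq_mul, Complex.ofReal_mul, smul_add, smul_smul]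

lemma Gab_eq_pmat (a b : E3) (i j : Fin 2) (hne : nvec a b i j ≠ 0) :
    Gab a b i j = pmat ‖nvec a b i j‖ (nvec a b i j) := by
  set n := nvec a b i j with hn
  have hnn : (‖n‖ : ℝ) ≠ 0 := norm_ne_zero_iff.mpr hne
  have step : Gab a b i j = (‖n‖ : ℂ) • pmat 1 (‖n‖⁻¹ • n) := by
    simp [Gab, pmat, ← hn]
  rw [step, pmat_eq, pmat_eq]
  ext i' j'
  fin_cases i' <;> fin_cases j' <;>
    simp only [Matrix.smul_apply, Matrix.cons_val', Matrix.cons_val_zero, Matrix.cons_val_one,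
      Matrix.head_cons, Matrix.empty_val', Matrix.cons_val_fin_one, Matrix.head_fin_const,
      Matrix.of_apply, PiLp.smul_apply, smul_eq_mul] <;>
    push_cast <;> field_simp <;> ring

lemma pmat_congr {t s : ℝ} {g h : E3} (h1 : t = s) (h2 : g = h) : pmat t g = pmat s h := by
  rw [h1, h2]

lemma Eobs_one (v : E3) : Eobs 1 v 1 = pmat 1 v := by
  simp [Eobs, Amat, pmat]

lemma Eobs_zero (v : E3) : Eobs 1 v 0 = pmat 1 (-v) := by
  have : Eobs 1 v 0 = 1 - Amat 1 v := by simp [Eobs]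
  rw [this, one_eq_pmat, show Amat 1 v = pmat 1 v from by simp [Amat, pmat], pmat_sub]
  norm_num

end BJU

open BJU in
/-- on the boundary `‖a+b‖ + ‖a-b‖ = 2`, the family `Gab a b` is a joint
observable of `E^{1,a}` and `E^{1,b}`, and it is their unique joint observable. -/
theorem boundary_joint_unique (a b : E3) (hab : a ≠ b) (hab' : a ≠ -b)
    (h : ‖a + b‖ + ‖a - b‖ = 2) :
    IsJointObs (Gab a b) (Eobs 1 a) (Eobs 1 b) ∧
      ∀ G' : Fin 2 → Fin 2 → Mat2, IsJointObs G' (Eobs 1 a) (Eobs 1 b) → G' = Gab a b := by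
  have hapb : a + b ≠ 0 := fun h0 => hab' (eq_neg_of_add_eq_zero_left h0)
  have hamb : a - b ≠ 0 := sub_ne_zero.mpr hab
  have e11 : nvec a b 1 1 = (2:ℝ)⁻¹ • (a + b) := by
    norm_num [nvec]
  have e10 : nvec a b 1 0 = (2:ℝ)⁻¹ • (a - b) := by
    norm_num [nvec, sub_eq_add_neg]
  have e01 : nvec a b 0 1 = -((2:ℝ)⁻¹ • (a - b)) := by
    norm_num [nvec]
    module
  have e00 : nvec a b 0 0 = -((2:ℝ)⁻¹ • (a + b)) := by
    norm_num [nvec]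
    module
  have N1 : ‖(2:ℝ)⁻¹ • (a + b)‖ = ‖a+b‖/2 := by
    rw [norm_smul]; simp [Real.norm_eq_abs]; ring
  have N2 : ‖(2:ℝ)⁻¹ • (a - b)‖ = ‖a-b‖/2 := by
    rw [norm_smul]; simp [Real.norm_eq_abs]; ring
  have hnz : ∀ i j, nvec a b i j ≠ 0 := by
    intro i j
    fin_cases i <;> fin_cases j <;>
      simp only [Fin.zero_eta, Fin.mk_one, e00, e01, e10, e11, ne_eq, neg_eq_zero,
        smul_eq_zero] <;>
      push_neg <;>
      exact ⟨by norm_num, by assumption⟩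
  have g11 : Gab a b 1 1 = pmat (‖a+b‖/2) ((2:ℝ)⁻¹ • (a + b)) := by
    rw [Gab_eq_pmat a b 1 1 (hnz 1 1), e11, N1]
  have g10 : Gab a b 1 0 = pmat (‖a-b‖/2) ((2:ℝ)⁻¹ • (a - b)) := by
    rw [Gab_eq_pmat a b 1 0 (hnz 1 0), e10, N2]
  have g01 : Gab a b 0 1 = pmat (‖a-b‖/2) (-((2:ℝ)⁻¹ • (a - b))) := by
    rw [Gab_eq_pmat a b 0 1 (hnz 0 1), e01, norm_neg, N2]
  have g00 : Gab a b 0 0 = pmat (‖a+b‖/2) (-((2:ℝ)⁻¹ • (a + b))) := by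
    rw [Gab_eq_pmat a b 0 0 (hnz 0 0), e00, norm_neg, N1]
  constructor
  · refine ⟨?_, ?_, ?_, ?_⟩
    · intro i j
      rw [Gab_eq_pmat a b i j (hnz i j), pmat_psd_iff]
    · simp only [Fin.sum_univ_two, g00, g01, g10, g11, pmat_add, one_eq_pmat]
      exact pmat_congr (by linarith) (by module)
    · intro i
      fin_cases i <;>
        simp only [Fin.zero_eta, Fin.mk_one, Fin.sum_univ_two, g00, g01, g10, g11, pmat_add,
          Eobs_zero, Eobs_one]
      · exact pmat_congr (by linarith) (by module)
      · exact pmat_congr (by linarith) (by module)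
    · intro j
      fin_cases j <;>
        simp only [Fin.zero_eta, Fin.mk_one, Fin.sum_univ_two, g00, g01, g10, g11, pmat_add,
          Eobs_zero, Eobs_one]
      · exact pmat_congr (by linarith) (by module)
      · exact pmat_congr (by linarith) (by module)
  · rintro G' ⟨hpsd, hsum, hrow, hcol⟩
    obtain ⟨i00, i11, ic, r0, r1, rdet⟩ := psd_elim (hpsd 1 1)
    set t : ℝ := (G' 1 1 0 0).re + (G' 1 1 1 1).re with ht
    set g : E3 := WithLp.toLp 2 ![2*(G' 1 1 1 0).re, 2*(G' 1 1 1 0).im,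
      (G' 1 1 0 0).re - (G' 1 1 1 1).re] with hg
    have hM : G' 1 1 = pmat t g := by
      rw [pmat_eq]
      ext i j
      fin_cases i <;> fin_cases j <;> apply Complex.ext <;>
        simp [ht, hg, i00, i11, ic, Complex.ext_iff] <;> ring
    have hrow1 := hrow 1
    have hrow0 := hrow 0
    have hcol1 := hcol 1
    rw [Fin.sum_univ_two, Eobs_one] at hrow1
    rw [Fin.sum_univ_two, Eobs_zero] at hrow0
    rw [Fin.sum_univ_two, Eobs_one] at hcol1
    have hG10 : G' 1 0 = pmat (1-t) (a - g) := by
      have : G' 1 0 = pmat 1 a - G' 1 1 := by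
        rw [← hrow1]; abel
      rw [this, hM, pmat_sub]
    have hG01 : G' 0 1 = pmat (1-t) (b - g) := by
      have : G' 0 1 = pmat 1 b - G' 1 1 := by
        rw [← hcol1]; abel
      rw [this, hM, pmat_sub]
    have hG00 : G' 0 0 = pmat t (-a - (b - g)) := by
      have : G' 0 0 = pmat 1 (-a) - G' 0 1 := by
        rw [← hrow0]; abel
      rw [this, hG01, pmat_sub]
      norm_num
    have c1 : ‖g‖ ≤ t := (pmat_psd_iff _ _).mp (hM ▸ hpsd 1 1)
    have c2 : ‖a - g‖ ≤ 1 - t := (pmat_psd_iff _ _).mp (hG10 ▸ hpsd 1 0)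
    have c3 : ‖b - g‖ ≤ 1 - t := (pmat_psd_iff _ _).mp (hG01 ▸ hpsd 0 1)
    have c4 : ‖a + b - g‖ ≤ t := by
      have hc4 : ‖-a - (b - g)‖ ≤ t := (pmat_psd_iff _ _).mp (hG00 ▸ hpsd 0 0)
      rwa [show -a - (b - g) = -(a + b - g) from by abel, norm_neg] at hc4
    have T1 : ‖a+b‖ ≤ ‖g‖ + ‖a + b - g‖ := by
      have := norm_add_le g (a + b - g)
      rwa [show g + (a + b - g) = a + b from by abel] at this
    have T2 : ‖a-b‖ ≤ ‖a - g‖ + ‖b - g‖ := by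
      have := norm_sub_le (a - g) (b - g)
      rwa [show a - g - (b - g) = a - b from by abel] at this
    have q1 : ‖g‖ = ‖a + b - g‖ := by linarith
    have q2 : ‖g + (a + b - g)‖ = ‖g‖ + ‖a + b - g‖ := by
      rw [show g + (a + b - g) = a + b from by abel]; linarith
    have geq : g = a + b - g := eq_of_norm_eq_of_norm_add_eq q1 q2
    have h2g : g + g = a + b := by
      nth_rewrite 2 [geq]; abel
    have hgv : g = (2:ℝ)⁻¹ • (a + b) := by
      rw [← h2g]; module
    have htv : t = ‖a+b‖/2 := by
      have hng : ‖g‖ = ‖a+b‖/2 := by rw [hgv, N1]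
      linarith
    funext i j
    fin_cases i <;> fin_cases j <;> simp only [Fin.zero_eta, Fin.mk_one]
    · rw [hG00, g00]
      exact pmat_congr htv (by rw [hgv]; module)
    · rw [hG01, g01]
      exact pmat_congr (by linarith) (by rw [hgv]; module)
    · rw [hG10, g10]
      exact pmat_congr (by linarith) (by rw [hgv]; module)
    · rw [hM, g11]
      exact pmat_congr htv hgv
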